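/- Consider the stochastic coupling argument of the threshold theorem: let T₁, T₂, ... be the (coupled) outcomes of successive transmission attempts (i.i.d. Bernoulli per link). If Packet 2 starts its transmission attempts at node i with time-to-deadline σ and Packet 1 starts at the same node with time-to-deadline σ − k (k ≥ 1), and both experience the identical sequence of subsequent successes/failures, then whenever Packet 1 reaches the destination within its deadline, Packet 2 also reaches the destination within its deadline. Hence the expected reward of transmitting immediately is at least that of waiting k slots. -/
import Mathlib

open MeasureTheory

/-- Coupling argument of the threshold theorem.  Let T ω be the
(coupled) number of slots a packet needs to reach the destination, determined
by the common sequence of transmission outcomes.  Packet 1 starts with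
time-to-deadline σ − k (k ≥ 1, having waited k slots) and Packet 2 with
time-to-deadline σ.  Then whenever Packet 1 is delivered in time
(T ω ≤ σ − k), so is Packet 2 (T ω ≤ σ); and since the energy costs c paid
are identical under the coupling, the expected reward of transmitting
immediately is at least that of waiting k slots:
E[β·1{T ≤ σ−k} − c] ≤ E[β·1{T ≤ σ} − c]. -/
theorem coupling_immediate_transmission_dominates
    {Ω : Type*} [MeasurableSpace Ω] (μ : Measure Ω) [IsProbabilityMeasure μ]
    (T : Ω → ℕ) (hT : Measurable T)
    (σ k : ℕ) (hk : 1 ≤ k) (hkσ : k ≤ σ)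
    (β : ℝ) (hβ : 0 ≤ β)
    (c : Ω → ℝ) (hc : Integrable c μ) :
    (∀ ω, T ω ≤ σ - k → T ω ≤ σ) ∧
    (∫ ω, (Set.indicator {ω | T ω ≤ σ - k} (fun _ => β) ω - c ω) ∂μ)
      ≤ ∫ ω, (Set.indicator {ω | T ω ≤ σ} (fun _ => β) ω - c ω) ∂μ := by
  have hsub : {ω | T ω ≤ σ - k} ⊆ {ω | T ω ≤ σ} := fun ω h =>
    le_trans h (Nat.sub_le _ _)
  refine ⟨fun ω h => hsub h, ?_⟩
  have hm1 : MeasurableSet {ω | T ω ≤ σ - k} := hT measurableSet_Iic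
  have hm2 : MeasurableSet {ω | T ω ≤ σ} := hT measurableSet_Iic
  have hi1 : Integrable (Set.indicator {ω | T ω ≤ σ - k} (fun _ => β)) μ :=
    (integrable_const β).indicator hm1
  have hi2 : Integrable (Set.indicator {ω | T ω ≤ σ} (fun _ => β)) μ :=
    (integrable_const β).indicator hm2
  apply integral_mono (hi1.sub hc) (hi2.sub hc)
  intro ω
  simp only [Pi.sub_apply, sub_le_sub_iff_right]
  by_cases h : ω ∈ {ω | T ω ≤ σ - k}
  · rw [Set.indicator_of_mem h, Set.indicator_of_mem (hsub h)]
  · rw [Set.indicator_of_notMem h]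
    exact Set.indicator_nonneg (fun _ _ => hβ) ω
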